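/- For the closed Jackson network with d queues and n customers, for any vector γ that is a strictly positive convex combination γ = Σ_{x∈Ω} α_x x with α_x > 0 for all x ∈ Ω and Σ_x α_x = 1 (Ω = {x ∈ ℕ^d : Σ_i x_i = n}), there exist service rates μ ∈ (0,∞)^d such that the stationary mean queue length vector equals γ: Σ_{x∈Ω} x_i π_x(μ) = γ_i for all i. -/

import Mathlib

open Real Finset

private lemma sup'_const_mul {ι : Type*} (s : Finset ι) (h : s.Nonempty) (f : ι → ℝ) (a : ℝ)
    (ha : 0 ≤ a) : s.sup' h (fun i => a * f i) = a * s.sup' h f := by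
  rw [Finset.comp_sup'_eq_sup'_comp h (fun t : ℝ => a * t) (fun x y => mul_max_of_nonneg x y ha)]
  rfl

theorem stmt_19 (d n : ℕ) (hd : 1 ≤ d) (lam : Fin d → ℝ) (hl : ∀ i, 0 < lam i)
    (S : Finset (Fin d → Fin (n + 1)))
    (hS : S = Finset.univ.filter (fun x : Fin d → Fin (n + 1) => ∑ i, (x i : ℕ) = n))
    (α : (Fin d → Fin (n + 1)) → ℝ)
    (hα : ∀ x ∈ S, 0 < α x) (hα1 : ∑ x ∈ S, α x = 1)
    (γ : Fin d → ℝ) (hγ : ∀ i, γ i = ∑ x ∈ S, α x * ((x i : ℕ) : ℝ)) :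
    ∃ mu : Fin d → ℝ, (∀ i, 0 < mu i) ∧
      ∀ i : Fin d,
        ∑ x ∈ S, ((x i : ℕ) : ℝ) *
            ((∏ j, (lam j / mu j) ^ (x j : ℕ)) /
              (∑ y ∈ S, ∏ j, (lam j / mu j) ^ (y j : ℕ)))
          = γ i := by
  have hmem : ∀ x : Fin d → Fin (n + 1), x ∈ S ↔ ∑ i, ((x i : ℕ)) = n := by
    subst hS; intro x; simp
  rcases Nat.eq_zero_or_pos n with hn | hn
  · -- trivial case n = 0
    subst hn
    refine ⟨lam, hl, fun i => ?_⟩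
    rw [hγ]
    refine Finset.sum_congr rfl fun x _ => ?_
    have : (x i : ℕ) = 0 := Nat.lt_one_iff.mp (x i).isLt
    simp [this]
  -- main case
  set dot : (Fin d → ℝ) → (Fin d → Fin (n + 1)) → ℝ :=
    fun θ x => ∑ j, θ j * ((x j : ℕ) : ℝ) with hdot
  set Z : (Fin d → ℝ) → ℝ := fun θ => ∑ x ∈ S, Real.exp (dot θ x) with hZ
  set F : (Fin d → ℝ) → ℝ := fun θ => Real.log (Z θ) - ∑ i, θ i * γ i with hF
  -- basis-like elements of S
  have hnlt : n < n + 1 := n.lt_succ_self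
  set eb : Fin d → (Fin d → Fin (n + 1)) :=
    fun i j => if j = i then (⟨n, hnlt⟩ : Fin (n + 1)) else 0 with heb
  have hebS : ∀ i, eb i ∈ S := by
    intro i
    rw [hmem]
    rw [Finset.sum_eq_single i]
    · simp [heb]
    · intro b _ hb; simp [heb, hb]
    · intro h; exact absurd (Finset.mem_univ i) h
  have hebval : ∀ i j, ((eb i j : ℕ) : ℝ) = if j = i then (n : ℝ) else 0 := by
    intro i j; by_cases h : j = i <;> simp [heb, h]
  have hSne : S.Nonempty := ⟨eb ⟨0, hd⟩, hebS _⟩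
  have hZpos : ∀ θ, 0 < Z θ :=
    fun θ => Finset.sum_pos (fun x _ => Real.exp_pos _) hSne
  -- continuity
  have hdotcont : ∀ x, Continuous fun θ : Fin d → ℝ => dot θ x := by
    intro x
    exact continuous_finset_sum _ fun j _ => (continuous_apply j).mul continuous_const
  have hZcont : Continuous Z :=
    continuous_finset_sum _ fun x _ => Real.continuous_exp.comp (hdotcont x)
  have hlincont : Continuous fun θ : Fin d → ℝ => ∑ i, θ i * γ i :=
    continuous_finset_sum _ fun i _ => (continuous_apply i).mul continuous_const
  have hFcont : Continuous F := by
    refine Continuous.sub ?_ hlincont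
    rw [continuous_iff_continuousAt]
    exact fun θ => (Real.continuousAt_log (hZpos θ).ne').comp hZcont.continuousAt
  -- sum of γ equals n
  have hγsum : ∑ i, γ i = (n : ℝ) := by
    have : ∑ i, γ i = ∑ x ∈ S, ∑ i, α x * ((x i : ℕ) : ℝ) := by
      rw [Finset.sum_comm]
      exact Finset.sum_congr rfl fun i _ => hγ i
    rw [this]
    have : ∀ x ∈ S, ∑ i, α x * ((x i : ℕ) : ℝ) = α x * n := by
      intro x hx
      rw [← Finset.mul_sum]
      congr 1
      rw [← Nat.cast_sum, (hmem x).1 hx]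
    rw [Finset.sum_congr rfl this, ← Finset.sum_mul, hα1, one_mul]
  -- invariance of F under adding constants
  have hinv : ∀ (θ : Fin d → ℝ) (t : ℝ), F (fun j => θ j + t) = F θ := by
    intro θ t
    have hdoteq : ∀ x ∈ S, dot (fun j => θ j + t) x = dot θ x + t * n := by
      intro x hx
      simp only [hdot, add_mul]
      rw [Finset.sum_add_distrib]
      congr 1
      rw [← Finset.mul_sum, ← Nat.cast_sum, (hmem x).1 hx]
    have hZeq : Z (fun j => θ j + t) = Real.exp (t * n) * Z θ := by
      simp only [hZ, Finset.mul_sum]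
      refine Finset.sum_congr rfl fun x hx => ?_
      rw [hdoteq x hx, add_comm, Real.exp_add]
    have hlineq : ∑ i, (θ i + t) * γ i = (∑ i, θ i * γ i) + t * n := by
      simp only [add_mul]
      rw [Finset.sum_add_distrib, ← Finset.mul_sum, hγsum]
    simp only [hF, hZeq, hlineq, Real.log_mul (Real.exp_pos _).ne' (hZpos θ).ne',
      Real.log_exp]
    ring
  -- the function φ
  set M : (Fin d → ℝ) → ℝ := fun θ => S.sup' hSne (fun x => dot θ x) with hM
  set φ : (Fin d → ℝ) → ℝ := fun θ => M θ - ∑ i, θ i * γ i with hφ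
  have hφlb : ∀ θ, φ θ ≤ F θ := by
    intro θ
    have : M θ ≤ Real.log (Z θ) := by
      obtain ⟨x, hx, hxe⟩ := Finset.exists_mem_eq_sup' hSne (fun x => dot θ x)
      have hxe' : M θ = dot θ x := hxe
      rw [Real.le_log_iff_exp_le (hZpos θ), hxe']
      exact Finset.single_le_sum (fun y _ => (Real.exp_pos _).le) hx
    simpa only [hφ, hF] using sub_le_sub_right this _
  -- weighted average identity
  have havg : ∀ θ, ∑ i, θ i * γ i = ∑ x ∈ S, α x * dot θ x := by
    intro θ
    simp only [hdot, Finset.mul_sum]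
    rw [Finset.sum_comm]
    refine Finset.sum_congr rfl fun i _ => ?_
    rw [hγ, Finset.mul_sum]
    refine Finset.sum_congr rfl fun x _ => by ring
  -- positivity of φ on H \ {0}
  have hφpos : ∀ θ : Fin d → ℝ, (∑ i, θ i = 0) → θ ≠ 0 → 0 < φ θ := by
    intro θ hθH hθ0
    by_contra hc
    push_neg at hc
    have hle : ∀ x ∈ S, dot θ x ≤ M θ := fun x hx => Finset.le_sup' _ hx
    have h1 : ∑ i, θ i * γ i ≤ M θ := by
      rw [havg]
      calc ∑ x ∈ S, α x * dot θ x ≤ ∑ x ∈ S, α x * M θ :=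
            Finset.sum_le_sum fun x hx => mul_le_mul_of_nonneg_left (hle x hx) (hα x hx).le
        _ = M θ := by rw [← Finset.sum_mul, hα1, one_mul]
    have h2 : M θ ≤ ∑ i, θ i * γ i := by
      have hc' : M θ - ∑ i, θ i * γ i ≤ 0 := hc
      linarith
    have heq : ∑ i, θ i * γ i = M θ := le_antisymm h1 h2
    have hzero : ∑ x ∈ S, α x * (M θ - dot θ x) = 0 := by
      simp only [mul_sub]
      rw [Finset.sum_sub_distrib, ← Finset.sum_mul, hα1, one_mul, ← havg]
      linarith
    have hall : ∀ x ∈ S, dot θ x = M θ := by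
      intro x hx
      have := (Finset.sum_eq_zero_iff_of_nonneg (fun y hy =>
        mul_nonneg (hα y hy).le (sub_nonneg.mpr (hle y hy)))).1 hzero x hx
      have h2 : M θ - dot θ x = 0 := by
        rcases mul_eq_zero.mp this with h | h
        · exact absurd h (hα x hx).ne'
        · exact h
      linarith
    have hcoord : ∀ i, θ i * n = M θ := by
      intro i
      have := hall (eb i) (hebS i)
      rw [← this]
      simp only [hdot]
      rw [Finset.sum_eq_single i]
      · rw [hebval]; simp
      · intro b _ hb; rw [hebval]; simp [hb]
      · intro h; exact absurd (Finset.mem_univ i) h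
    have hMzero : M θ = 0 := by
      have hsum : (∑ i, θ i) * n = d * M θ := by
        rw [Finset.sum_mul]
        simp only [hcoord]
        simp [mul_comm]
      rw [hθH, zero_mul] at hsum
      have hd' : (d:ℝ) ≠ 0 := by
        exact_mod_cast Nat.one_le_iff_ne_zero.mp hd
      exact (mul_eq_zero.mp hsum.symm).resolve_left hd'
    have : θ = 0 := by
      funext i
      have := hcoord i
      rw [hMzero] at this
      have hn' : (0:ℝ) < n := by exact_mod_cast hn
      have := mul_eq_zero.mp this
      rcases this with h | h
      · exact h
      · exact absurd h hn'.ne'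
    exact hθ0 this
  -- continuity of φ
  have hφcont : Continuous φ := by
    refine Continuous.sub ?_ hlincont
    rw [continuous_iff_continuousAt]
    exact fun θ => ContinuousAt.finset_sup'_apply hSne fun x _ => (hdotcont x).continuousAt
  -- homogeneity of φ
  have hφhom : ∀ (a : ℝ), 0 ≤ a → ∀ θ, φ (a • θ) = a * φ θ := by
    intro a ha θ
    have hdots : ∀ x, dot (a • θ) x = a * dot θ x := by
      intro x
      simp only [hdot, Finset.mul_sum, Pi.smul_apply, smul_eq_mul, mul_assoc]
    have hMs : M (a • θ) = a * M θ := by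
      simp only [hM]
      rw [← sup'_const_mul S hSne (fun x => dot θ x) a ha]
      exact Finset.sup'_congr hSne rfl fun x _ => hdots x
    simp only [hφ, hMs, Pi.smul_apply, smul_eq_mul, mul_sub, Finset.mul_sum, mul_assoc]
  -- uniform lower bound on H
  have hcbound : ∃ c : ℝ, 0 < c ∧ ∀ θ : Fin d → ℝ, (∑ i, θ i = 0) → c * ‖θ‖ ≤ φ θ := by
    set K : Set (Fin d → ℝ) := {θ | (∑ i, θ i = 0) ∧ ‖θ‖ = 1} with hK
    by_cases hKne : K.Nonempty
    · have hKc : IsCompact K := by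
        have hclosed : IsClosed K := by
          refine IsClosed.inter ?_ ?_
          · exact isClosed_eq (continuous_finset_sum _ fun i _ => continuous_apply i)
              continuous_const
          · exact isClosed_eq continuous_norm continuous_const
        have hbdd : Bornology.IsBounded K := by
          refine Metric.isBounded_iff_subset_closedBall 0 |>.mpr ⟨1, fun θ hθ => ?_⟩
          simp only [Metric.mem_closedBall, dist_zero_right]
          exact le_of_eq hθ.2
        exact Metric.isCompact_of_isClosed_isBounded hclosed hbdd
      obtain ⟨θ0, hθ0K, hθ0min⟩ := hKc.exists_isMinOn hKne hφcont.continuousOn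
      have hc : 0 < φ θ0 := by
        refine hφpos θ0 hθ0K.1 ?_
        intro h
        rw [h] at hθ0K
        simpa using hθ0K.2
      refine ⟨φ θ0, hc, fun θ hθH => ?_⟩
      by_cases hθ : θ = 0
      · subst hθ
        have : φ 0 = 0 := by
          have := hφhom 0 le_rfl 0
          simpa using this
        simp [this]
      · have hnorm : 0 < ‖θ‖ := norm_pos_iff.mpr hθ
        have hvK : (‖θ‖⁻¹ • θ) ∈ K := by
          constructor
          · simp only [Pi.smul_apply, smul_eq_mul, ← Finset.mul_sum, hθH, mul_zero]
          · simp [norm_smul, abs_of_pos (inv_pos.mpr hnorm), inv_mul_cancel₀ hnorm.ne']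
        have := hθ0min hvK
        simp only [Set.mem_setOf_eq] at this
        rw [hφhom _ (inv_pos.mpr hnorm).le θ] at this
        calc φ θ0 * ‖θ‖ ≤ (‖θ‖⁻¹ * φ θ) * ‖θ‖ :=
              mul_le_mul_of_nonneg_right this hnorm.le
          _ = φ θ := by field_simp
    · refine ⟨1, one_pos, fun θ hθH => ?_⟩
      by_cases hθ : θ = 0
      · subst hθ
        have : φ 0 = 0 := by simpa using hφhom 0 le_rfl 0
        simp [this]
      · exfalso
        apply hKne
        have hnorm : 0 < ‖θ‖ := norm_pos_iff.mpr hθ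
        refine ⟨‖θ‖⁻¹ • θ, ?_, ?_⟩
        · simp only [Pi.smul_apply, smul_eq_mul, ← Finset.mul_sum, hθH, mul_zero]
        · simp [norm_smul, abs_of_pos (inv_pos.mpr hnorm), inv_mul_cancel₀ hnorm.ne']
  obtain ⟨c, hcpos, hclb⟩ := hcbound
  -- existence of a minimizer over H via compactness
  have hmin : ∃ θs : Fin d → ℝ, ∀ θ : Fin d → ℝ, F θs ≤ F θ := by
    set R : ℝ := max 1 ((F 0 + 1) / c) with hR
    have hRpos : 0 < R := lt_of_lt_of_le one_pos (le_max_left _ _)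
    have hcR : F 0 < c * R := by
      have h1 : (F 0 + 1) / c ≤ R := le_max_right _ _
      have : F 0 + 1 ≤ c * R := by
        rw [div_le_iff₀ hcpos] at h1
        linarith [h1]
      linarith
    set K : Set (Fin d → ℝ) := {θ | (∑ i, θ i = 0) ∧ ‖θ‖ ≤ R} with hK
    have hKne : K.Nonempty := ⟨0, by simp [hK, hRpos.le]⟩
    have hKc : IsCompact K := by
      have hclosed : IsClosed K :=
        IsClosed.inter (isClosed_eq (continuous_finset_sum _ fun i _ => continuous_apply i)
          continuous_const) (isClosed_le continuous_norm continuous_const)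
      have hbdd : Bornology.IsBounded K := by
        refine Metric.isBounded_iff_subset_closedBall 0 |>.mpr ⟨R, fun θ hθ => ?_⟩
        simp only [Metric.mem_closedBall, dist_zero_right]
        exact hθ.2
      exact Metric.isCompact_of_isClosed_isBounded hclosed hbdd
    obtain ⟨θs, hθsK, hθsmin⟩ := hKc.exists_isMinOn hKne hFcont.continuousOn
    refine ⟨θs, fun θ => ?_⟩
    -- reduce to H
    set t : ℝ := (∑ j, θ j) / d with ht
    set θ' : Fin d → ℝ := fun j => θ j - t with hθ'
    have hθ'H : ∑ i, θ' i = 0 := by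
      simp only [hθ']
      rw [Finset.sum_sub_distrib, Finset.sum_const, Finset.card_univ, Fintype.card_fin]
      have hd' : (d:ℝ) ≠ 0 := by
        exact_mod_cast Nat.one_le_iff_ne_zero.mp hd
      have hdt : (d:ℝ) * ((∑ j, θ j) / d) = ∑ j, θ j := by field_simp
      rw [nsmul_eq_mul, ht, hdt, sub_self]
    have hFθ : F θ = F θ' := by
      have : θ = fun j => θ' j + t := by funext j; simp [hθ']
      rw [this, hinv]
    rw [hFθ]
    by_cases hcase : ‖θ'‖ ≤ R
    · exact hθsmin ⟨hθ'H, hcase⟩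
    · push_neg at hcase
      have h1 : c * R ≤ c * ‖θ'‖ := mul_le_mul_of_nonneg_left hcase.le hcpos.le
      have h2 : c * ‖θ'‖ ≤ φ θ' := hclb θ' hθ'H
      have h3 : φ θ' ≤ F θ' := hφlb θ'
      have h4 : F θs ≤ F 0 := hθsmin ⟨by simp, by simp [hRpos.le]⟩
      linarith
  obtain ⟨θs, hθsmin⟩ := hmin
  -- use the minimizer: define mu
  refine ⟨fun j => lam j * Real.exp (-θs j), fun j => mul_pos (hl j) (Real.exp_pos _), ?_⟩
  have hratio : ∀ j, lam j / (lam j * Real.exp (-θs j)) = Real.exp (θs j) := by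
    intro j
    rw [Real.exp_neg]
    field_simp
    exact div_self (hl j).ne'
  intro i
  -- derivative condition at θs in direction i
  have hkey : (∑ x ∈ S, ((x i : ℕ) : ℝ) * Real.exp (dot θs x)) / Z θs = γ i := by
    set u : ℝ → ℝ := fun t => ∑ x ∈ S, Real.exp (dot θs x + t * ((x i : ℕ) : ℝ)) with hu
    have hu0 : u 0 = Z θs := by simp [hu, hZ]
    have huder : HasDerivAt u (∑ x ∈ S, ((x i : ℕ) : ℝ) * Real.exp (dot θs x)) 0 := by
      refine HasDerivAt.fun_sum fun x _ => ?_
      have h1 : HasDerivAt (fun t : ℝ => dot θs x + t * ((x i : ℕ) : ℝ)) ((x i : ℕ) : ℝ) 0 := by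
        simpa using ((hasDerivAt_id (0:ℝ)).mul_const ((x i : ℕ) : ℝ)).const_add (dot θs x)
      simpa [mul_comm] using h1.exp
    set g : ℝ → ℝ := fun t => Real.log (u t) - ((∑ j, θs j * γ j) + t * γ i) with hg
    have hgder : HasDerivAt g
        ((∑ x ∈ S, ((x i : ℕ) : ℝ) * Real.exp (dot θs x)) / Z θs - γ i) 0 := by
      rw [← hu0]
      refine HasDerivAt.sub (huder.log (by rw [hu0]; exact (hZpos θs).ne')) ?_
      simpa using ((hasDerivAt_id (0:ℝ)).mul_const (γ i)).const_add (∑ j, θs j * γ j)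
    have hgeq : ∀ t, g t = F (fun j => θs j + t * (if j = i then 1 else 0)) := by
      intro t
      have hdots : ∀ x, dot (fun j => θs j + t * (if j = i then 1 else 0)) x
          = dot θs x + t * ((x i : ℕ) : ℝ) := by
        intro x
        simp only [hdot, add_mul]
        rw [Finset.sum_add_distrib]
        congr 1
        rw [Finset.sum_eq_single i]
        · simp
        · intro b _ hb; simp [hb]
        · intro h; exact absurd (Finset.mem_univ i) h
      have hlins : ∑ j, (θs j + t * (if j = i then 1 else 0)) * γ j
          = (∑ j, θs j * γ j) + t * γ i := by
        simp only [add_mul]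
        rw [Finset.sum_add_distrib]
        congr 1
        rw [Finset.sum_eq_single i]
        · simp
        · intro b _ hb; simp [hb]
        · intro h; exact absurd (Finset.mem_univ i) h
      simp only [hg, hF, hu, hZ, hlins]
      congr 2
      exact Finset.sum_congr rfl fun x _ => by rw [hdots]
    have hg0 : g 0 = F θs := by
      rw [hgeq 0]
      congr 1
      funext j
      simp
    have hlocmin : IsLocalMin g 0 := by
      have hall : ∀ t, g 0 ≤ g t := by
        intro t
        rw [hg0, hgeq t]
        exact hθsmin _
      exact Filter.Eventually.of_forall hall
    have := hlocmin.hasDerivAt_eq_zero hgder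
    linarith [this]
  -- conclude
  have hprod : ∀ x : Fin d → Fin (n+1),
      (∏ j, (lam j / (lam j * Real.exp (-θs j))) ^ (x j : ℕ)) = Real.exp (dot θs x) := by
    intro x
    have : ∀ j, (lam j / (lam j * Real.exp (-θs j))) ^ (x j : ℕ)
        = Real.exp (θs j * ((x j : ℕ) : ℝ)) := by
      intro j
      rw [hratio j, mul_comm, Real.exp_nat_mul]
    rw [Finset.prod_congr rfl fun j _ => this j, ← Real.exp_sum]
  calc ∑ x ∈ S, ((x i : ℕ) : ℝ) *
          ((∏ j, (lam j / (lam j * Real.exp (-θs j))) ^ (x j : ℕ)) /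
            (∑ y ∈ S, ∏ j, (lam j / (lam j * Real.exp (-θs j))) ^ (y j : ℕ)))
      = ∑ x ∈ S, ((x i : ℕ) : ℝ) * (Real.exp (dot θs x) / Z θs) := by
        refine Finset.sum_congr rfl fun x _ => ?_
        rw [hprod x]
        congr 1
        simp only [hZ]
        congr 1
        exact Finset.sum_congr rfl fun y _ => hprod y
    _ = (∑ x ∈ S, ((x i : ℕ) : ℝ) * Real.exp (dot θs x)) / Z θs := by
        rw [Finset.sum_div]
        exact Finset.sum_congr rfl fun x _ => by ring
    _ = γ i := hkey
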